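/- arXiv:2202.11676 — 2 statements merged into one kernel-verified Lean document; each statement's English description precedes it below -/
import Mathlib

section
/- Let A be a commutative ring, I an ideal of A[T] containing a monic polynomial, and J = I ∩ A. Then there exists j ∈ J² with 1 + j ∈ I' ∩ A for any ideal I' of A[T] that contains a monic polynomial and satisfies I' + J²[T] = A[T]. More precisely: if I' ⊆ A[T] contains a monic polynomial and I' + J²A[T] = A[T], then (I' ∩ A) + J² = A, so there exists j ∈ J² with 1 + j ∈ I' ∩ A. -/
open Polynomial

/-- Lam's Lemma 1.1: if an ideal of `A[X]` contains a monic polynomial and is comaximal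
with an extended ideal `a[X]`, then its contraction to `A` is comaximal with `a`. -/
theorem aux_contraction_comaximal {A : Type} [CommRing A]
    (I' : Ideal A[X]) (hI' : ∃ f ∈ I', f.Monic) (a : Ideal A)
    (hco : I' ⊔ a.map (Polynomial.C : A →+* A[X]) = ⊤) :
    I'.comap (Polynomial.C : A →+* A[X]) ⊔ a = ⊤ := by
  classical
  obtain ⟨f, hfI, hf⟩ := hI'
  -- the quotient ring
  set R := A[X] ⧸ I' with hR
  have hker : RingHom.ker (algebraMap A R) = I'.comap (Polynomial.C : A →+* A[X]) := by
    ext x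
    simp only [RingHom.mem_ker, Ideal.mem_comap]
    rw [show algebraMap A R = (Ideal.Quotient.mk I').comp (Polynomial.C : A →+* A[X]) from rfl]
    exact Ideal.Quotient.eq_zero_iff_mem
  -- integrality
  have hx : IsIntegral A (Ideal.Quotient.mk I' X) := by
    refine ⟨f, hf, ?_⟩
    have : (Ideal.Quotient.mkₐ A I') (Polynomial.aeval X f)
        = Polynomial.aeval ((Ideal.Quotient.mkₐ A I') X) f :=
      (Polynomial.aeval_algHom_apply _ _ _).symm
    have h0 : (Ideal.Quotient.mk I') ((Polynomial.aeval X) f) = 0 :=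
      Ideal.Quotient.eq_zero_iff_mem.mpr (by simpa using hfI)
    simp only [Ideal.Quotient.mkₐ_eq_mk] at this
    rw [h0] at this
    simpa [Polynomial.aeval_def] using this.symm
  have hadj : Algebra.adjoin A ({Ideal.Quotient.mk I' X} : Set R) = ⊤ := by
    have h1 : Algebra.adjoin A ({X} : Set A[X]) = ⊤ := Polynomial.adjoin_X
    rw [show ({Ideal.Quotient.mk I' X} : Set R)
        = (Ideal.Quotient.mkₐ A I') '' {X} from (Set.image_singleton).symm,
      ← AlgHom.map_adjoin, h1, Algebra.map_top, AlgHom.range_eq_top]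
    exact Ideal.Quotient.mkₐ_surjective A I'
  have hfin : Module.Finite A R := by
    have hfg := hx.fg_adjoin_singleton
    rw [hadj] at hfg
    exact ⟨by simpa [Algebra.top_toSubmodule] using hfg⟩
  have hint : Algebra.IsIntegral A R := Algebra.IsIntegral.of_finite A R
  -- extension of a to R is top
  have hmap : a.map (algebraMap A R) = ⊤ := by
    have : a.map (algebraMap A R)
        = Ideal.map (Ideal.Quotient.mk I') (a.map (Polynomial.C : A →+* A[X])) := by
      rw [Ideal.map_map]; rfl
    rw [this]
    have := congrArg (Ideal.map (Ideal.Quotient.mk I')) hco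
    rwa [Ideal.map_sup, Ideal.map_quotient_self, Ideal.map_top, bot_sup_eq] at this
  -- by contradiction
  by_contra h
  obtain ⟨m, hm, hle⟩ := Ideal.exists_le_maximal _ h
  have hPm : RingHom.ker (algebraMap A R) ≤ m := by
    rw [hker]; exact le_trans le_sup_left hle
  obtain ⟨q, hq, hqc⟩ := Ideal.exists_ideal_over_maximal_of_isIntegral (S := R) m hPm
  have : a.map (algebraMap A R) ≤ q :=
    Ideal.map_le_iff_le_comap.mpr (hqc ▸ le_trans le_sup_right hle)
  rw [hmap] at this
  exact hq.ne_top (top_le_iff.mp this)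

/-- Let `A` be commutative, `I ⊆ A[T]` an ideal containing a monic polynomial and
`J = I ∩ A`.  If `I' ⊆ A[T]` contains a monic polynomial and `I' + J²[T] = A[T]`, then
`(I' ∩ A) + J² = A`; in particular there exists `j ∈ J²` with `1 + j ∈ I' ∩ A`. -/
theorem statement2 {A : Type} [CommRing A]
    (I : Ideal A[X]) (hI : ∃ f ∈ I, f.Monic)
    (J : Ideal A) (hJ : J = I.comap (Polynomial.C : A →+* A[X]))
    (I' : Ideal A[X]) (hI' : ∃ f ∈ I', f.Monic)
    (hco : I' ⊔ (J ^ 2).map (Polynomial.C : A →+* A[X]) = ⊤) :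
    I'.comap (Polynomial.C : A →+* A[X]) ⊔ J ^ 2 = ⊤ ∧
      ∃ j ∈ J ^ 2, 1 + j ∈ I'.comap (Polynomial.C : A →+* A[X]) := by
  have h := aux_contraction_comaximal I' hI' (J ^ 2) hco
  refine ⟨h, ?_⟩
  have h1 : (1 : A) ∈ I'.comap (Polynomial.C : A →+* A[X]) ⊔ J ^ 2 := h ▸ Submodule.mem_top
  obtain ⟨p, hp, j, hj, hpj⟩ := Submodule.mem_sup.mp h1
  exact ⟨-j, neg_mem hj, by simpa [← hpj] using hp⟩
end

section
/- Let A be a Noetherian domain and I ⊆ A[T] an ideal with I = (f₁, f₂) + I²T. Set J = I ∩ A and suppose I_{1+J} = (g₁, g₂) in A_{1+J}[T] with g_i − f_i ∈ (I²T)_{1+J} for i = 1, 2. Then there exist F₁, F₂ ∈ I such that I = (F₁, F₂) and F_i − f_i ∈ I²T for i = 1, 2. -/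
open Polynomial

/-- The multiplicative set `1 + J` for an ideal `J`. -/
def oneAdd {A : Type} [CommRing A] (J : Ideal A) : Submonoid A where
  carrier := {x | ∃ j ∈ J, x = 1 + j}
  one_mem' := ⟨0, J.zero_mem, by ring⟩
  mul_mem' := by
    rintro x y ⟨j₁, hj₁, rfl⟩ ⟨j₂, hj₂, rfl⟩
    exact ⟨j₁ + j₂ + j₁ * j₂, by
      exact add_mem (add_mem hj₁ hj₂) (J.mul_mem_right _ hj₁), by ring⟩


open Finset


open Polynomial

/-- A bare-bones 2×2 matrix over a commutative ring. -/
structure M2 (R : Type) where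
  a : R
  b : R
  c : R
  d : R

namespace M2

variable {R : Type} [CommRing R]

@[ext] theorem ext {M N : M2 R} (ha : M.a = N.a) (hb : M.b = N.b) (hc : M.c = N.c)
    (hd : M.d = N.d) : M = N := by
  cases M; cases N; simp_all

/-- matrix product -/
def mul (M N : M2 R) : M2 R :=
  ⟨M.a * N.a + M.b * N.c, M.a * N.b + M.b * N.d,
   M.c * N.a + M.d * N.c, M.c * N.b + M.d * N.d⟩

/-- adjugate -/
def adj (M : M2 R) : M2 R := ⟨M.d, -M.b, -M.c, M.a⟩

/-- determinant -/
def det (M : M2 R) : R := M.a * M.d - M.b * M.c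

/-- scalar multiple -/
def sm (r : R) (M : M2 R) : M2 R := ⟨r * M.a, r * M.b, r * M.c, r * M.d⟩

/-- sum -/
def add (M N : M2 R) : M2 R := ⟨M.a + N.a, M.b + N.b, M.c + N.c, M.d + N.d⟩

/-- identity -/
def one : M2 R := ⟨1, 0, 0, 1⟩

/-- row vector times matrix -/
def vmul (u : R × R) (M : M2 R) : R × R :=
  (u.1 * M.a + u.2 * M.c, u.1 * M.b + u.2 * M.d)

/-- scalar times row vector -/
def vsm (r : R) (u : R × R) : R × R := (r * u.1, r * u.2)

theorem mul_adj (M : M2 R) : M.mul M.adj = sm M.det one := by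
  ext <;> simp [mul, adj, det, sm, one] <;> ring

theorem adj_mul (M : M2 R) : M.adj.mul M = sm M.det one := by
  ext <;> simp [mul, adj, det, sm, one] <;> ring

theorem det_mul (M N : M2 R) : (M.mul N).det = M.det * N.det := by
  simp [mul, det]; ring

theorem det_sm (r : R) (M : M2 R) : (sm r M).det = r ^ 2 * M.det := by
  simp [det, sm]; ring

theorem adj_sm (r : R) (M : M2 R) : (sm r M).adj = sm r M.adj := by
  ext <;> simp [adj, sm] <;> ring

theorem adj_adj (M : M2 R) : M.adj.adj = M := by ext <;> simp [adj]

theorem adj_mul_rev (M N : M2 R) : (M.mul N).adj = N.adj.mul M.adj := by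
  ext <;> simp [mul, adj] <;> ring

theorem mul_sm (r : R) (M N : M2 R) : M.mul (sm r N) = sm r (M.mul N) := by
  ext <;> simp [mul, sm] <;> ring

theorem sm_mul (r : R) (M N : M2 R) : (sm r M).mul N = sm r (M.mul N) := by
  ext <;> simp [mul, sm] <;> ring

theorem sm_sm (r s : R) (M : M2 R) : sm r (sm s M) = sm (r * s) M := by
  ext <;> simp [sm] <;> ring

theorem vmul_vmul (u : R × R) (M N : M2 R) :
    vmul (vmul u M) N = vmul u (M.mul N) := by
  simp [vmul, mul]; constructor <;> ring

theorem vmul_sm (r : R) (u : R × R) (M : M2 R) :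
    vmul u (sm r M) = vsm r (vmul u M) := by
  simp [vmul, sm, vsm]; constructor <;> ring

theorem vsm_vmul (r : R) (u : R × R) (M : M2 R) :
    vmul (vsm r u) M = vsm r (vmul u M) := by
  simp [vmul, vsm]; constructor <;> ring

theorem vmul_one (u : R × R) : vmul u (one : M2 R) = u := by
  simp [vmul, one]

theorem vsm_vsm (r s : R) (u : R × R) : vsm r (vsm s u) = vsm (r * s) u := by
  simp [vsm]; constructor <;> ring

theorem mul_add' (M N P : M2 R) : M.mul (add N P) = add (M.mul N) (M.mul P) := by
  ext <;> simp [mul, add] <;> ring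

theorem add_mul' (M N P : M2 R) : (add M N).mul P = add (M.mul P) (N.mul P) := by
  ext <;> simp [mul, add] <;> ring

theorem sm_add (r : R) (M N : M2 R) : sm r (add M N) = add (sm r M) (sm r N) := by
  ext <;> simp [sm, add] <;> ring

theorem vmul_add (u : R × R) (M N : M2 R) :
    vmul u (add M N) = vmul u M + vmul u N := by
  simp [vmul, add, Prod.ext_iff]; constructor <;> ring

end M2




section PolyAux

variable {A : Type} [CommRing A]

/-- geometric-sum identity. -/
theorem oneAdd_geom (x : A) (k : ℕ) :
    (1 + x) * (∑ i ∈ Finset.range k, (-x) ^ i) = 1 - (-x) ^ k := by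
  have h := geom_sum_mul (-x) k
  linear_combination -h

/-- comaximality workhorse: if `u * z = 1 + e * E` then `u` and `e ^ k` are comaximal. -/
theorem comax {e u z E : A} (h : u * z = 1 + e * E) (k : ℕ) :
    ∃ α β : A, α * u + β * e ^ k = 1 := by
  refine ⟨z * ∑ i ∈ Finset.range k, (-(e * E)) ^ i, (-1)^k * E ^ k, ?_⟩
  have hg := oneAdd_geom (e * E) k
  calc z * (∑ i ∈ Finset.range k, (-(e * E)) ^ i) * u + (-1)^k * E ^ k * e ^ k
      = (u * z) * (∑ i ∈ Finset.range k, (-(e * E)) ^ i) + (-1)^k * E^k * e^k := by ring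
    _ = (1 + e * E) * (∑ i ∈ Finset.range k, (-(e * E)) ^ i) + (-1)^k * E^k*e^k := by rw [h]
    _ = 1 - (-(e * E)) ^ k + (-1)^k * E^k * e^k := by rw [hg]
    _ = 1 := by rw [neg_pow]; ring

/-- substitution `T ↦ λ T` splits off the constant term with a factor `λ X`. -/
theorem sub_split (u : A[X]) (l : A) :
    ∃ δ : A[X], u.comp (C l * X) = C (u.coeff 0) + C l * X * δ := by
  induction u using Polynomial.induction_on' with
  | add p q hp hq =>
    obtain ⟨δ₁, h₁⟩ := hp; obtain ⟨δ₂, h₂⟩ := hq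
    refine ⟨δ₁ + δ₂, ?_⟩
    rw [add_comp, coeff_add, map_add, h₁, h₂]; ring
  | monomial n a =>
    rcases n with _ | m
    · exact ⟨0, by simp [monomial_comp]⟩
    · refine ⟨C a * (C l * X) ^ m, ?_⟩
      rw [monomial_comp, coeff_monomial, if_neg (by omega : ¬ (m + 1 = 0))]
      rw [map_zero]
      ring

/-- difference quotient: `u(T) - u(λ T)` is divisible by `(1-λ) X`. -/
theorem diff_quot (u : A[X]) (l : A) :
    ∃ r : A[X], u - u.comp (C l * X) = C (1 - l) * X * r := by
  induction u using Polynomial.induction_on' with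
  | add p q hp hq =>
    obtain ⟨r₁, h₁⟩ := hp; obtain ⟨r₂, h₂⟩ := hq
    refine ⟨r₁ + r₂, ?_⟩
    rw [add_comp,
      show p + q - (p.comp (C l * X) + q.comp (C l * X))
        = (p - p.comp (C l * X)) + (q - q.comp (C l * X)) by ring, h₁, h₂]
    ring
  | monomial n a =>
    rcases n with _ | m
    · exact ⟨0, by simp [monomial_comp]⟩
    · refine ⟨C a * (∑ i ∈ Finset.range (m+1), (C l)^i) * X ^ m, ?_⟩
      have hS := geom_sum_mul (C l : A[X]) (m+1)
      rw [monomial_comp, ← C_mul_X_pow_eq_monomial, map_sub, map_one]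
      linear_combination (C a * X^(m+1)) * hS

end PolyAux




section Clearing

variable {A : Type} [CommRing A] (J : Ideal A)

theorem mem_oneAdd {x : A} : x ∈ oneAdd J ↔ ∃ j ∈ J, x = 1 + j := Iff.rfl

local notation "Loc" => Localization (oneAdd J)

/-- clear denominators of a polynomial over the localization -/
theorem clear_poly (q : Polynomial Loc) :
    ∃ (m : oneAdd J) (q₀ : Polynomial A),
      C (algebraMap A Loc m) * q = q₀.map (algebraMap A Loc) := by
  induction q using Polynomial.induction_on' with
  | add p q hp hq =>
    obtain ⟨m₁, p₀, h₁⟩ := hp; obtain ⟨m₂, q₀, h₂⟩ := hq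
    refine ⟨m₁ * m₂, C (m₂ : A) * p₀ + C (m₁ : A) * q₀, ?_⟩
    rw [Polynomial.map_add, Polynomial.map_mul, Polynomial.map_mul, map_C, ← h₁, ← h₂]
    simp only [Submonoid.coe_mul, map_mul, Polynomial.map_C]
    ring
  | monomial n a =>
    obtain ⟨⟨a₀, m⟩, hm⟩ := IsLocalization.surj (M := oneAdd J) (S := Loc) a
    refine ⟨m, monomial n a₀, ?_⟩
    rw [C_mul_monomial, Polynomial.map_monomial, mul_comm, hm]

/-- clear denominators of an element of a mapped ideal -/
theorem clear_mem_map (Q : Ideal (Polynomial A)) (y : Polynomial Loc)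
    (hy : y ∈ Q.map (Polynomial.mapRingHom (algebraMap A Loc))) :
    ∃ (m : oneAdd J), ∃ δ ∈ Q,
      C (algebraMap A Loc m) * y = δ.map (algebraMap A Loc) := by
  rw [Ideal.map] at hy
  induction hy using Submodule.span_induction with
  | mem x hx =>
    obtain ⟨δ, hδ, rfl⟩ := hx
    exact ⟨1, δ, hδ, by simp⟩
  | zero => exact ⟨1, 0, Q.zero_mem, by simp⟩
  | add x y _ _ hx hy =>
    obtain ⟨m₁, δ₁, hδ₁, h₁⟩ := hx; obtain ⟨m₂, δ₂, hδ₂, h₂⟩ := hy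
    refine ⟨m₁ * m₂, C (m₂ : A) * δ₁ + C (m₁ : A) * δ₂,
      Q.add_mem (Q.mul_mem_left _ hδ₁) (Q.mul_mem_left _ hδ₂), ?_⟩
    rw [Polynomial.map_add, Polynomial.map_mul, Polynomial.map_mul, map_C, ← h₁, ← h₂]
    simp only [Submonoid.coe_mul, map_mul, Polynomial.map_C]
    ring
  | smul r x _ hx =>
    obtain ⟨m₁, δ₁, hδ₁, h₁⟩ := hx
    obtain ⟨m₂, r₀, h₂⟩ := clear_poly J r
    refine ⟨m₂ * m₁, r₀ * δ₁, Q.mul_mem_left _ hδ₁, ?_⟩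
    rw [smul_eq_mul, Polynomial.map_mul, ← h₁, ← h₂]
    simp only [Submonoid.coe_mul, map_mul, Polynomial.map_C]
    ring

end Clearing

section Core

open M2

variable {A : Type} [CommRing A] [IsDomain A]

set_option maxHeartbeats 1600000 in
/-- The core patching construction. -/
theorem core (I : Ideal (Polynomial A)) (f₁ f₂ : Polynomial A)
    (hf₁ : f₁ ∈ I) (hf₂ : f₂ ∈ I)
    (v w e : A) (hev : v * w = 1 + e)
    (hCe : Polynomial.C e ∈ I) (he0 : e ≠ 0) (hv0 : v ≠ 0) (hw0 : w ≠ 0)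
    (c₁ c₂ : A) (hcf : c₁ * f₁.coeff 0 + c₂ * f₂.coeff 0 = e)
    (ε₁ ε₂ : Polynomial A)
    (hε₁ : ε₁ ∈ I ^ 2 * Ideal.span {(X : Polynomial A)})
    (hε₂ : ε₂ ∈ I ^ 2 * Ideal.span {(X : Polynomial A)})
    (hKall : ∀ h ∈ I, Polynomial.C w * h ∈
      Ideal.span {Polynomial.C v * f₁ + ε₁, Polynomial.C v * f₂ + ε₂}) :
    ∃ F₁ F₂ : Polynomial A, I = Ideal.span {F₁, F₂} ∧
      F₁ - f₁ ∈ I ^ 2 * Ideal.span {(X : Polynomial A)} ∧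
      F₂ - f₂ ∈ I ^ 2 * Ideal.span {(X : Polynomial A)} := by
  classical
  -- notation
  set 𝔦 : Ideal (Polynomial A) := I ^ 2 * Ideal.span {(X : Polynomial A)} with h𝔦def
  have h𝔦I : 𝔦 ≤ I := le_trans Ideal.mul_le_left (Ideal.pow_le_self two_ne_zero)
  have h𝔦X : 𝔦 ≤ Ideal.span {(X : Polynomial A)} := Ideal.mul_le_right
  have hcoeff𝔦 : ∀ d ∈ 𝔦, d.coeff 0 = 0 := by
    intro d hd
    have := h𝔦X hd
    rw [Ideal.mem_span_singleton] at this
    exact X_dvd_iff.mp this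
  set K₁ : Polynomial A := Polynomial.C v * f₁ + ε₁ with hK₁def
  set K₂ : Polynomial A := Polynomial.C v * f₂ + ε₂ with hK₂def
  have hK₁I : K₁ ∈ I := I.add_mem (I.mul_mem_left _ hf₁) (h𝔦I hε₁)
  have hK₂I : K₂ ∈ I := I.add_mem (I.mul_mem_left _ hf₂) (h𝔦I hε₂)
  -- the completion row p
  obtain ⟨p₁, p₂, hpK⟩ := Ideal.mem_span_pair.mp (hKall (Polynomial.C e) hCe)
  -- constant coefficients
  have hε₁0 : ε₁.coeff 0 = 0 := hcoeff𝔦 _ hε₁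
  have hε₂0 : ε₂.coeff 0 = 0 := hcoeff𝔦 _ hε₂
  have hK₁0 : K₁.coeff 0 = v * f₁.coeff 0 := by
    simp [hK₁def, coeff_add, coeff_C_mul, hε₁0]
  have hK₂0 : K₂.coeff 0 = v * f₂.coeff 0 := by
    simp [hK₂def, coeff_add, coeff_C_mul, hε₂0]
  -- X-split of f₁ f₂
  obtain ⟨h₁, hh₁⟩ : ∃ h₁, f₁ = Polynomial.C (f₁.coeff 0) + X * h₁ := by
    obtain ⟨r, hr⟩ := X_dvd_iff.mpr (show (f₁ - Polynomial.C (f₁.coeff 0)).coeff 0 = 0 by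
      simp [coeff_C])
    exact ⟨r, by linear_combination hr⟩
  obtain ⟨h₂, hh₂⟩ : ∃ h₂, f₂ = Polynomial.C (f₂.coeff 0) + X * h₂ := by
    obtain ⟨r, hr⟩ := X_dvd_iff.mpr (show (f₂ - Polynomial.C (f₂.coeff 0)).coeff 0 = 0 by
      simp [coeff_C])
    exact ⟨r, by linear_combination hr⟩
  -- the base scalar identity (constant coefficient of hpK)
  have h0 : v * (p₁.coeff 0 * f₁.coeff 0 + p₂.coeff 0 * f₂.coeff 0) = w * e := by
    have h := congrArg (fun q : Polynomial A => q.coeff 0) hpK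
    simp only [coeff_add, mul_coeff_zero, hK₁0, hK₂0, coeff_C_zero] at h
    linear_combination h
  -- auxiliary scalars
  obtain ⟨d1, hd1⟩ : ∃ a : A, v * p₂.coeff 0 - w * c₂ = a := ⟨_, rfl⟩
  obtain ⟨d2, hd2⟩ : ∃ a : A, w * c₁ - v * p₁.coeff 0 = a := ⟨_, rfl⟩
  obtain ⟨lam, hlam⟩ : ∃ a : A, p₁.coeff 0 * d1 + p₂.coeff 0 * d2 = a := ⟨_, rfl⟩
  have hID1 : d1 * f₂.coeff 0 = d2 * f₁.coeff 0 := by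
    rw [← hd1, ← hd2]; linear_combination h0 - w * hcf
  have hID2 : v * (lam * f₁.coeff 0) = w * e * d1 := by
    rw [← hlam]
    linear_combination (-(v * p₂.coeff 0)) * hID1 + d1 * h0
  have hID2' : v * (lam * f₂.coeff 0) = w * e * d2 := by
    rw [← hlam]
    linear_combination (v * p₁.coeff 0) * hID1 + d2 * h0

  -- mapped (into A[X]) versions of the scalar identities
  have hcfC : Polynomial.C c₁ * Polynomial.C (f₁.coeff 0)
      + Polynomial.C c₂ * Polynomial.C (f₂.coeff 0) = Polynomial.C e := by
    have := congrArg (Polynomial.C (R := A)) hcf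
    simpa [map_add, map_mul] using this
  have hevC : Polynomial.C v * Polynomial.C w = 1 + Polynomial.C e := by
    have := congrArg (Polynomial.C (R := A)) hev
    simpa [map_mul, map_add] using this
  -- the matrices
  set Sm : M2 (Polynomial A) := ⟨Polynomial.C w ^ 2 * Polynomial.C e ^ 2 * K₁,
      Polynomial.C w ^ 2 * Polynomial.C e ^ 2 * K₂,
      Polynomial.C v * Polynomial.C lam * K₁
        - Polynomial.C v ^ 2 * (Polynomial.C w * Polynomial.C e) * p₂,
      Polynomial.C v * Polynomial.C lam * K₂
        + Polynomial.C v ^ 2 * (Polynomial.C w * Polynomial.C e) * p₁⟩ with hSm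
  set Rt : M2 (Polynomial A) := ⟨Polynomial.C c₁, -(Polynomial.C e * Polynomial.C (f₂.coeff 0)),
      Polynomial.C c₂, Polynomial.C e * Polynomial.C (f₁.coeff 0)⟩ with hRt
  set Ups : M2 (Polynomial A) := Rt.mul Sm with hUps
  have hdetSm : Sm.det = Polynomial.C v ^ 2 * Polynomial.C w ^ 4 * Polynomial.C e ^ 4 := by
    simp only [hSm, M2.det]
    linear_combination (Polynomial.C w ^ 2 * Polynomial.C e ^ 2 * Polynomial.C v ^ 2
      * (Polynomial.C w * Polynomial.C e)) * hpK
  have hdetRt : Rt.det = Polynomial.C e ^ 2 := by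
    simp only [hRt, M2.det]
    linear_combination Polynomial.C e * hcfC
  have hdetUps : Ups.det = Polynomial.C v ^ 2 * Polynomial.C w ^ 4 * Polynomial.C e ^ 6 := by
    rw [hUps, M2.det_mul, hdetRt, hdetSm]; ring
  -- row fact : f0 · Ups = (w²e³) • K
  have hFrow : M2.vmul (Polynomial.C (f₁.coeff 0), Polynomial.C (f₂.coeff 0)) Ups
      = M2.vsm (Polynomial.C w ^ 2 * Polynomial.C e ^ 3) (K₁, K₂) := by
    rw [hUps, ← M2.vmul_vmul]
    have h1 : M2.vmul (Polynomial.C (f₁.coeff 0), Polynomial.C (f₂.coeff 0)) Rt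
        = (Polynomial.C e, 0) := by
      simp only [hRt, M2.vmul, Prod.ext_iff]
      exact ⟨by linear_combination hcfC, by ring⟩
    rw [h1]
    simp only [hSm, M2.vmul, M2.vsm, Prod.ext_iff]
    exact ⟨by ring, by ring⟩
  -- constant coefficients of the entries of Ups
  have hUps0a : Ups.a.coeff 0 = v * w ^ 2 * e ^ 3 := by
    simp only [hUps, hRt, hSm, M2.mul, coeff_add, mul_coeff_zero, coeff_neg, coeff_sub,
      ← C_pow, coeff_C_zero, hK₁0, hK₂0]
    linear_combination (-(v*e*f₂.coeff 0))*hID2 + (v*w*e^2*f₂.coeff 0)*hd1 + (v*w^2*e^2)*hcf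
  have hUps0b : Ups.b.coeff 0 = 0 := by
    simp only [hUps, hRt, hSm, M2.mul, coeff_add, mul_coeff_zero, coeff_neg, coeff_sub,
      ← C_pow, coeff_C_zero, hK₁0, hK₂0]
    linear_combination (-(v*e*f₂.coeff 0))*hID2' + (v*w*e^2*f₂.coeff 0)*hd2
  have hUps0c : Ups.c.coeff 0 = 0 := by
    simp only [hUps, hRt, hSm, M2.mul, coeff_add, mul_coeff_zero, coeff_neg, coeff_sub,
      ← C_pow, coeff_C_zero, hK₁0, hK₂0]
    linear_combination (v*e*f₁.coeff 0)*hID2 + (-(v*w*e^2*f₁.coeff 0))*hd1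
  have hUps0d : Ups.d.coeff 0 = v * w ^ 2 * e ^ 3 := by
    simp only [hUps, hRt, hSm, M2.mul, coeff_add, mul_coeff_zero, coeff_neg, coeff_sub,
      ← C_pow, coeff_C_zero, hK₁0, hK₂0]
    linear_combination (v*e*f₁.coeff 0)*hID2' + (-(v*w*e^2*f₁.coeff 0))*hd2 + (v*w^2*e^2)*hcf

  -- the substitution parameter
  set E4 : A := 4 + 6*e + 4*e^2 + e^3 with hE4
  set ll : A := (e*E4)^10 with hll
  set Gt : A := ∑ i ∈ Finset.range 10, (-(e*E4))^i with hGt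
  have hll1 : 1 - ll = (v*w)^4 * Gt := by
    have hg := oneAdd_geom (e*E4) 10
    have h4 : (v*w)^4 = 1 + e*E4 := by rw [hev, hE4]; ring
    calc 1 - ll = (1 + e*E4) * Gt := by rw [hll, hGt, hg]; ring
      _ = (v*w)^4 * Gt := by rw [h4]
  have hllC : (1 : Polynomial A) - Polynomial.C ll
      = (Polynomial.C v * Polynomial.C w)^4 * Polynomial.C Gt := by
    have := congrArg (Polynomial.C (R := A)) hll1
    simpa [map_sub, map_mul, map_pow, map_one] using this
  have hllC2 : (Polynomial.C ll : Polynomial A) = (Polynomial.C e * Polynomial.C E4)^10 := by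
    have := congrArg (Polynomial.C (R := A)) hll
    simpa [map_mul, map_pow] using this
  -- the substituted matrix
  set UpsL : M2 (Polynomial A) := ⟨Ups.a.comp (Polynomial.C ll * X),
      Ups.b.comp (Polynomial.C ll * X), Ups.c.comp (Polynomial.C ll * X),
      Ups.d.comp (Polynomial.C ll * X)⟩ with hUpsL
  have hdetUpsL : UpsL.det = Polynomial.C v^2 * Polynomial.C w^4 * Polynomial.C e^6 := by
    have hd : UpsL.det = (Ups.det).comp (Polynomial.C ll * X) := by
      simp only [hUpsL, M2.det, mul_comp, sub_comp]
    rw [hd, hdetUps]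
    simp [mul_comp, pow_comp]
  obtain ⟨Da, hDa⟩ := sub_split Ups.a ll
  obtain ⟨Db, hDb⟩ := sub_split Ups.b ll
  obtain ⟨Dc, hDc⟩ := sub_split Ups.c ll
  obtain ⟨Dd, hDd⟩ := sub_split Ups.d ll
  rw [hUps0a] at hDa; rw [hUps0b] at hDb; rw [hUps0c] at hDc; rw [hUps0d] at hDd
  have hCE10 : (Polynomial.C (E4^10) : Polynomial A) = Polynomial.C E4 ^ 10 := by
    simp [map_pow]
  have hCvw2e3 : (Polynomial.C (v * w^2 * e^3) : Polynomial A)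
      = Polynomial.C v * Polynomial.C w^2 * Polynomial.C e^3 := by
    simp [map_mul, map_pow]
  set VB : M2 (Polynomial A) := ⟨Polynomial.C v * Polynomial.C w^2
        + Polynomial.C e^7 * X * (Polynomial.C (E4^10) * Da),
      Polynomial.C e^7 * X * (Polynomial.C (E4^10) * Db),
      Polynomial.C e^7 * X * (Polynomial.C (E4^10) * Dc),
      Polynomial.C v * Polynomial.C w^2
        + Polynomial.C e^7 * X * (Polynomial.C (E4^10) * Dd)⟩ with hVB
  have hULVB : UpsL = M2.sm (Polynomial.C e^3) VB := by
    refine M2.ext ?_ ?_ ?_ ?_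
    · show Ups.a.comp (Polynomial.C ll * X) = Polynomial.C e^3 * VB.a
      rw [hDa, hllC2, hCvw2e3]; simp only [hVB]; rw [hCE10]; ring
    · show Ups.b.comp (Polynomial.C ll * X) = Polynomial.C e^3 * VB.b
      rw [hDb, hllC2, map_zero]; simp only [hVB]; rw [hCE10]; ring
    · show Ups.c.comp (Polynomial.C ll * X) = Polynomial.C e^3 * VB.c
      rw [hDc, hllC2, map_zero]; simp only [hVB]; rw [hCE10]; ring
    · show Ups.d.comp (Polynomial.C ll * X) = Polynomial.C e^3 * VB.d
      rw [hDd, hllC2, hCvw2e3]; simp only [hVB]; rw [hCE10]; ring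
  have hCene : (Polynomial.C e : Polynomial A) ≠ 0 := fun hh => he0 (by simpa using hh)
  have hCvne : (Polynomial.C v : Polynomial A) ≠ 0 := fun hh => hv0 (by simpa using hh)
  have hCwne : (Polynomial.C w : Polynomial A) ≠ 0 := fun hh => hw0 (by simpa using hh)
  have hdetVB : VB.det = Polynomial.C v^2 * Polynomial.C w^4 := by
    have h6 : (Polynomial.C e^6 : Polynomial A) * VB.det
        = Polynomial.C e^6 * (Polynomial.C v^2 * Polynomial.C w^4) := by
      have h7 := hdetUpsL
      rw [hULVB, M2.det_sm] at h7
      linear_combination h7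
    exact mul_left_cancel₀ (pow_ne_zero _ hCene) h6
  -- difference quotients
  obtain ⟨Wa, hWa⟩ := diff_quot Ups.a ll
  obtain ⟨Wb, hWb⟩ := diff_quot Ups.b ll
  obtain ⟨Wc, hWc⟩ := diff_quot Ups.c ll
  obtain ⟨Wd, hWd⟩ := diff_quot Ups.d ll
  set Wm : M2 (Polynomial A) := ⟨Wa, Wb, Wc, Wd⟩ with hWm
  have hUdecomp : Ups = M2.add UpsL (M2.sm (Polynomial.C (1 - ll) * X) Wm) := by
    refine M2.ext ?_ ?_ ?_ ?_
    · show Ups.a = Ups.a.comp (Polynomial.C ll * X) + Polynomial.C (1-ll) * X * Wa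
      linear_combination hWa
    · show Ups.b = Ups.b.comp (Polynomial.C ll * X) + Polynomial.C (1-ll) * X * Wb
      linear_combination hWb
    · show Ups.c = Ups.c.comp (Polynomial.C ll * X) + Polynomial.C (1-ll) * X * Wc
      linear_combination hWc
    · show Ups.d = Ups.d.comp (Polynomial.C ll * X) + Polynomial.C (1-ll) * X * Wd
      linear_combination hWd
  set VC : M2 (Polynomial A) := M2.add (M2.sm (Polynomial.C e^6) M2.one)
      (M2.sm (Polynomial.C v^2 * Polynomial.C Gt * X) (Wm.mul (M2.adj UpsL))) with hVC
  have hVCkey : Ups.mul (M2.adj UpsL) = M2.sm (Polynomial.C v^2 * Polynomial.C w^4) VC := by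
    rw [hUdecomp, M2.add_mul', M2.sm_mul, M2.mul_adj, hdetUpsL, hVC, M2.sm_add,
      M2.sm_sm, M2.sm_sm]
    have hsc1 : (Polynomial.C v^2 * Polynomial.C w^4 * Polynomial.C e^6 : Polynomial A)
        = Polynomial.C v^2 * Polynomial.C w^4 * (Polynomial.C e^6) := by ring
    refine M2.ext ?_ ?_ ?_ ?_ <;>
      simp only [M2.add, M2.sm, M2.one] <;>
      rw [map_sub, map_one, hllC] <;> ring

  -- rows
  set Krow : Polynomial A × Polynomial A := (K₁, K₂) with hKrow
  set f0row : Polynomial A × Polynomial A :=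
    (Polynomial.C (f₁.coeff 0), Polynomial.C (f₂.coeff 0)) with hf0row
  set Ptil : Polynomial A × Polynomial A := M2.vmul Krow (M2.adj VB) with hPtil
  set Qtil : Polynomial A × Polynomial A := M2.vmul f0row VC with hQtil
  have hR1pair : M2.vsm (Polynomial.C v^2 * Polynomial.C w^4) Qtil
      = M2.vsm (Polynomial.C w^2 * Polynomial.C e^6) Ptil := by
    calc M2.vsm (Polynomial.C v^2 * Polynomial.C w^4) Qtil
        = M2.vmul f0row (M2.sm (Polynomial.C v^2 * Polynomial.C w^4) VC) := by
          rw [hQtil, M2.vmul_sm]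
      _ = M2.vmul f0row (Ups.mul (M2.adj UpsL)) := by rw [hVCkey]
      _ = M2.vmul (M2.vmul f0row Ups) (M2.adj UpsL) := by rw [M2.vmul_vmul]
      _ = M2.vmul (M2.vsm (Polynomial.C w^2 * Polynomial.C e^3) Krow) (M2.adj UpsL) := by
          rw [hFrow]
      _ = M2.vsm (Polynomial.C w^2 * Polynomial.C e^3) (M2.vmul Krow (M2.adj UpsL)) := by
          rw [M2.vsm_vmul]
      _ = M2.vsm (Polynomial.C w^2 * Polynomial.C e^3)
            (M2.vsm (Polynomial.C e^3) Ptil) := by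
          rw [hULVB, M2.adj_sm, M2.vmul_sm, ← hPtil]
      _ = M2.vsm (Polynomial.C w^2 * Polynomial.C e^6) Ptil := by
          rw [M2.vsm_vsm]; congr 1; ring
  have hR1a : Polynomial.C v^2 * Polynomial.C w^2 * Qtil.1
      = Polynomial.C e^6 * Ptil.1 := by
    have h1 := congrArg Prod.fst hR1pair
    simp only [M2.vsm] at h1
    refine mul_left_cancel₀ (pow_ne_zero 2 hCwne) ?_
    linear_combination h1
  have hR1b : Polynomial.C v^2 * Polynomial.C w^2 * Qtil.2
      = Polynomial.C e^6 * Ptil.2 := by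
    have h1 := congrArg Prod.snd hR1pair
    simp only [M2.vsm] at h1
    refine mul_left_cancel₀ (pow_ne_zero 2 hCwne) ?_
    linear_combination h1
  -- comaximality data
  obtain ⟨A6, B6, h6⟩ := comax (e := e) (u := v^2*w^2) (z := 1) (E := 2+e)
    (by linear_combination (v*w + 1 + e) * hev) 6
  obtain ⟨A8, B8, h8⟩ := comax (e := e) (u := v^2*w^2) (z := 1) (E := 2+e)
    (by linear_combination (v*w + 1 + e) * hev) 8
  obtain ⟨A7, B7, h7⟩ := comax (e := e) (u := w^3) (z := v^3) (E := 3+3*e+e^2)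
    (by linear_combination ((v*w)^2 + (v*w)*(1+e) + (1+e)^2) * hev) 7
  have h6C : Polynomial.C A6 * (Polynomial.C v^2 * Polynomial.C w^2)
      + Polynomial.C B6 * Polynomial.C e^6 = 1 := by
    have := congrArg (Polynomial.C (R := A)) h6
    simpa [map_add, map_mul, map_pow, map_one] using this
  have h8C : Polynomial.C A8 * (Polynomial.C v^2 * Polynomial.C w^2)
      + Polynomial.C B8 * Polynomial.C e^8 = 1 := by
    have := congrArg (Polynomial.C (R := A)) h8
    simpa [map_add, map_mul, map_pow, map_one] using this
  have h7C : Polynomial.C A7 * Polynomial.C w^3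
      + Polynomial.C B7 * Polynomial.C e^7 = 1 := by
    have := congrArg (Polynomial.C (R := A)) h7
    simpa [map_add, map_mul, map_pow, map_one] using this
  -- the final row
  set Grow : Polynomial A × Polynomial A :=
    (Polynomial.C A6 * Ptil.1 + Polynomial.C B6 * Qtil.1,
     Polynomial.C A6 * Ptil.2 + Polynomial.C B6 * Qtil.2) with hGrow
  have hR3a : Polynomial.C v^2 * Polynomial.C w^2 * Grow.1 = Ptil.1 := by
    simp only [hGrow]
    linear_combination Polynomial.C B6 * hR1a + Ptil.1 * h6C
  have hR3b : Polynomial.C v^2 * Polynomial.C w^2 * Grow.2 = Ptil.2 := by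
    simp only [hGrow]
    linear_combination Polynomial.C B6 * hR1b + Ptil.2 * h6C
  have hR3pair : M2.vsm (Polynomial.C v^2 * Polynomial.C w^2) Grow = Ptil := by
    have : M2.vsm (Polynomial.C v^2 * Polynomial.C w^2) Grow
        = (Polynomial.C v^2 * Polynomial.C w^2 * Grow.1,
           Polynomial.C v^2 * Polynomial.C w^2 * Grow.2) := rfl
    rw [this, hR3a, hR3b]
  have hR2a : Polynomial.C e^6 * Grow.1 = Qtil.1 := by
    simp only [hGrow]
    linear_combination (- (Polynomial.C A6)) * hR1a + Qtil.1 * h6C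
  have hR2b : Polynomial.C e^6 * Grow.2 = Qtil.2 := by
    simp only [hGrow]
    linear_combination (- (Polynomial.C A6)) * hR1b + Qtil.2 * h6C
  -- chart identity on the w-side : Grow · VB = w² • K
  have hApair' : M2.vsm (Polynomial.C v^2 * Polynomial.C w^2) (M2.vmul Grow VB)
      = M2.vsm (Polynomial.C v^2 * Polynomial.C w^4) Krow := by
    calc M2.vsm (Polynomial.C v^2 * Polynomial.C w^2) (M2.vmul Grow VB)
        = M2.vmul (M2.vsm (Polynomial.C v^2 * Polynomial.C w^2) Grow) VB := by
          rw [M2.vsm_vmul]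
      _ = M2.vmul (M2.vmul Krow (M2.adj VB)) VB := by rw [hR3pair, hPtil]
      _ = M2.vmul Krow ((M2.adj VB).mul VB) := by rw [M2.vmul_vmul]
      _ = M2.vmul Krow (M2.sm VB.det M2.one) := by rw [M2.adj_mul]
      _ = M2.vsm VB.det (M2.vmul Krow M2.one) := by rw [M2.vmul_sm]
      _ = M2.vsm (Polynomial.C v^2 * Polynomial.C w^4) Krow := by
          rw [hdetVB, M2.vmul_one]
  have hAa : (M2.vmul Grow VB).1 = Polynomial.C w^2 * K₁ := by
    have h1 := congrArg Prod.fst hApair'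
    simp only [M2.vsm] at h1
    refine mul_left_cancel₀ (mul_ne_zero (pow_ne_zero 2 hCvne) (pow_ne_zero 2 hCwne)) ?_
    have : Krow.1 = K₁ := rfl
    rw [← this]
    linear_combination h1
  have hAb : (M2.vmul Grow VB).2 = Polynomial.C w^2 * K₂ := by
    have h1 := congrArg Prod.snd hApair'
    simp only [M2.vsm] at h1
    refine mul_left_cancel₀ (mul_ne_zero (pow_ne_zero 2 hCvne) (pow_ne_zero 2 hCwne)) ?_
    have : Krow.2 = K₂ := rfl
    rw [← this]
    linear_combination h1
  have hApair : M2.vmul Grow VB = M2.vsm (Polynomial.C w^2) Krow := by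
    have : M2.vmul Grow VB = ((M2.vmul Grow VB).1, (M2.vmul Grow VB).2) := rfl
    rw [this, hAa, hAb]; rfl
  -- K · adj Ups = (v²w²e³) • f0
  have hKadjU : M2.vmul Krow (M2.adj Ups)
      = M2.vsm (Polynomial.C v^2 * Polynomial.C w^2 * Polynomial.C e^3) f0row := by
    have hmain : M2.vsm (Polynomial.C w^2 * Polynomial.C e^3) (M2.vmul Krow (M2.adj Ups))
        = M2.vsm (Polynomial.C w^2 * Polynomial.C e^3)
            (M2.vsm (Polynomial.C v^2 * Polynomial.C w^2 * Polynomial.C e^3) f0row) := by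
      calc M2.vsm (Polynomial.C w^2 * Polynomial.C e^3) (M2.vmul Krow (M2.adj Ups))
          = M2.vmul (M2.vsm (Polynomial.C w^2 * Polynomial.C e^3) Krow) (M2.adj Ups) := by
            rw [M2.vsm_vmul]
        _ = M2.vmul (M2.vmul f0row Ups) (M2.adj Ups) := by rw [hFrow]
        _ = M2.vmul f0row (Ups.mul (M2.adj Ups)) := by rw [M2.vmul_vmul]
        _ = M2.vsm Ups.det (M2.vmul f0row M2.one) := by rw [M2.mul_adj, M2.vmul_sm]
        _ = M2.vsm (Polynomial.C v^2 * Polynomial.C w^4 * Polynomial.C e^6) f0row := by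
            rw [hdetUps, M2.vmul_one]
        _ = _ := by rw [M2.vsm_vsm]; exact congrArg (fun r => M2.vsm r f0row) (by ring)
    have hne : (Polynomial.C w^2 * Polynomial.C e^3 : Polynomial A) ≠ 0 :=
      mul_ne_zero (pow_ne_zero 2 hCwne) (pow_ne_zero 3 hCene)
    have h1 := congrArg Prod.fst hmain
    have h2 := congrArg Prod.snd hmain
    simp only [M2.vsm] at h1 h2
    have e1 := mul_left_cancel₀ hne h1
    have e2 := mul_left_cancel₀ hne h2
    have : M2.vmul Krow (M2.adj Ups)
        = ((M2.vmul Krow (M2.adj Ups)).1, (M2.vmul Krow (M2.adj Ups)).2) := rfl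
    rw [this, e1, e2]; rfl
  -- chart identity on the e-side : Grow · adj VC = e⁶ • f0
  have hBpair : M2.vmul Grow (M2.adj VC) = M2.vsm (Polynomial.C e^6) f0row := by
    have hsmadj : M2.sm (Polynomial.C v^2 * Polynomial.C w^4) (M2.adj VC)
        = UpsL.mul (M2.adj Ups) := by
      rw [← M2.adj_sm, ← hVCkey, M2.adj_mul_rev, M2.adj_adj]
    have hmain : M2.vsm (Polynomial.C v^2 * Polynomial.C w^4) (M2.vmul Grow (M2.adj VC))
        = M2.vsm (Polynomial.C v^2 * Polynomial.C w^4)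
            (M2.vsm (Polynomial.C e^6) f0row) := by
      calc M2.vsm (Polynomial.C v^2 * Polynomial.C w^4) (M2.vmul Grow (M2.adj VC))
          = M2.vmul Grow (M2.sm (Polynomial.C v^2 * Polynomial.C w^4) (M2.adj VC)) := by
            rw [M2.vmul_sm]
        _ = M2.vmul Grow (UpsL.mul (M2.adj Ups)) := by rw [hsmadj]
        _ = M2.vmul (M2.vmul Grow UpsL) (M2.adj Ups) := by rw [M2.vmul_vmul]
        _ = M2.vmul (M2.vsm (Polynomial.C e^3) (M2.vsm (Polynomial.C w^2) Krow))
              (M2.adj Ups) := by rw [hULVB, M2.vmul_sm, hApair]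
        _ = M2.vsm (Polynomial.C e^3 * Polynomial.C w^2) (M2.vmul Krow (M2.adj Ups)) := by
            rw [M2.vsm_vsm, M2.vsm_vmul]
        _ = M2.vsm (Polynomial.C e^3 * Polynomial.C w^2)
              (M2.vsm (Polynomial.C v^2 * Polynomial.C w^2 * Polynomial.C e^3) f0row) := by
            rw [hKadjU]
        _ = _ := by
            rw [M2.vsm_vsm, M2.vsm_vsm]; exact congrArg (fun r => M2.vsm r f0row) (by ring)
    have hne : (Polynomial.C v^2 * Polynomial.C w^4 : Polynomial A) ≠ 0 :=
      mul_ne_zero (pow_ne_zero 2 hCvne) (pow_ne_zero 4 hCwne)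
    have h1 := congrArg Prod.fst hmain
    have h2 := congrArg Prod.snd hmain
    simp only [M2.vsm] at h1 h2
    have e1 := mul_left_cancel₀ hne h1
    have e2 := mul_left_cancel₀ hne h2
    have hsplit : M2.vmul Grow (M2.adj VC)
        = ((M2.vmul Grow (M2.adj VC)).1, (M2.vmul Grow (M2.adj VC)).2) := rfl
    rw [hsplit, e1, e2]; rfl

  -- membership facts
  have hIX : ∀ a r : Polynomial A, a ∈ I → Polynomial.C e * a * X * r ∈ 𝔦 := by
    intro a r ha
    have h1 : Polynomial.C e * a ∈ I ^ 2 := by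
      rw [sq]; exact Ideal.mul_mem_mul hCe ha
    have h2 : Polynomial.C e * a * X ∈ 𝔦 := by
      rw [h𝔦def]; exact Ideal.mul_mem_mul h1 (Ideal.mem_span_singleton_self X)
    exact Ideal.mul_mem_right r _ h2
  have hPtil1ex : Ptil.1 = K₁ * (Polynomial.C v * Polynomial.C w^2
      + Polynomial.C e^7 * X * (Polynomial.C (E4^10) * Dd))
      + K₂ * (-(Polynomial.C e^7 * X * (Polynomial.C (E4^10) * Dc))) := rfl
  have hPtil2ex : Ptil.2 = K₁ * (-(Polynomial.C e^7 * X * (Polynomial.C (E4^10) * Db)))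
      + K₂ * (Polynomial.C v * Polynomial.C w^2
      + Polynomial.C e^7 * X * (Polynomial.C (E4^10) * Da)) := rfl
  have hPtil1I : Ptil.1 ∈ I := by
    rw [hPtil1ex]
    exact I.add_mem (Ideal.mul_mem_right _ _ hK₁I) (Ideal.mul_mem_right _ _ hK₂I)
  have hPtil2I : Ptil.2 ∈ I := by
    rw [hPtil2ex]
    exact I.add_mem (Ideal.mul_mem_right _ _ hK₁I) (Ideal.mul_mem_right _ _ hK₂I)
  have hQe1 : Polynomial.C e * Qtil.1 ∈ I := Ideal.mul_mem_right _ _ hCe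
  have hQe2 : Polynomial.C e * Qtil.2 ∈ I := Ideal.mul_mem_right _ _ hCe
  have hG1I : Grow.1 ∈ I := by
    have key : Grow.1 = Polynomial.C A8 * Ptil.1
        + Polynomial.C B8 * (Polynomial.C e^2 * Qtil.1) := by
      linear_combination (-Grow.1) * h8C + Polynomial.C A8 * hR3a
        + Polynomial.C B8 * Polynomial.C e^2 * hR2a
    rw [key]
    refine I.add_mem (Ideal.mul_mem_left _ _ hPtil1I) (Ideal.mul_mem_left _ _ ?_)
    have : (Polynomial.C e^2 * Qtil.1 : Polynomial A)
        = Polynomial.C e * (Polynomial.C e * Qtil.1) := by ring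
    rw [this]
    exact Ideal.mul_mem_left _ _ hQe1
  have hG2I : Grow.2 ∈ I := by
    have key : Grow.2 = Polynomial.C A8 * Ptil.2
        + Polynomial.C B8 * (Polynomial.C e^2 * Qtil.2) := by
      linear_combination (-Grow.2) * h8C + Polynomial.C A8 * hR3b
        + Polynomial.C B8 * Polynomial.C e^2 * hR2b
    rw [key]
    refine I.add_mem (Ideal.mul_mem_left _ _ hPtil2I) (Ideal.mul_mem_left _ _ ?_)
    have : (Polynomial.C e^2 * Qtil.2 : Polynomial A)
        = Polynomial.C e * (Polynomial.C e * Qtil.2) := by ring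
    rw [this]
    exact Ideal.mul_mem_left _ _ hQe2
  -- span facts
  set 𝔤 : Ideal (Polynomial A) := Ideal.span {Grow.1, Grow.2} with h𝔤
  have hAa' : Grow.1 * VB.a + Grow.2 * VB.c = Polynomial.C w^2 * K₁ := hAa
  have hAb' : Grow.1 * VB.b + Grow.2 * VB.d = Polynomial.C w^2 * K₂ := hAb
  have hBa' : Grow.1 * (M2.adj VC).a + Grow.2 * (M2.adj VC).c
      = Polynomial.C e^6 * Polynomial.C (f₁.coeff 0) := by
    have h1 := congrArg Prod.fst hBpair
    simpa only [M2.vsm, M2.vmul] using h1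
  have hBb' : Grow.1 * (M2.adj VC).b + Grow.2 * (M2.adj VC).d
      = Polynomial.C e^6 * Polynomial.C (f₂.coeff 0) := by
    have h1 := congrArg Prod.snd hBpair
    simpa only [M2.vsm, M2.vmul] using h1
  have he7mem : (Polynomial.C e^7 : Polynomial A) ∈ 𝔤 := by
    refine Ideal.mem_span_pair.mpr
      ⟨Polynomial.C c₁ * (M2.adj VC).a + Polynomial.C c₂ * (M2.adj VC).b,
       Polynomial.C c₁ * (M2.adj VC).c + Polynomial.C c₂ * (M2.adj VC).d, ?_⟩
    calc (Polynomial.C c₁ * (M2.adj VC).a + Polynomial.C c₂ * (M2.adj VC).b) * Grow.1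
        + (Polynomial.C c₁ * (M2.adj VC).c + Polynomial.C c₂ * (M2.adj VC).d) * Grow.2
        = Polynomial.C c₁ * (Grow.1 * (M2.adj VC).a + Grow.2 * (M2.adj VC).c)
          + Polynomial.C c₂ * (Grow.1 * (M2.adj VC).b + Grow.2 * (M2.adj VC).d) := by ring
      _ = Polynomial.C e^6 * (Polynomial.C c₁ * Polynomial.C (f₁.coeff 0)
          + Polynomial.C c₂ * Polynomial.C (f₂.coeff 0)) := by rw [hBa', hBb']; ring
      _ = Polynomial.C e^7 := by rw [hcfC]; ring
  have hIle : I ≤ 𝔤 := by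
    intro h hh
    obtain ⟨q₁, q₂, hq⟩ := Ideal.mem_span_pair.mp (hKall h hh)
    have hw3 : Polynomial.C w^3 * h ∈ 𝔤 := by
      refine Ideal.mem_span_pair.mpr
        ⟨q₁ * VB.a + q₂ * VB.b, q₁ * VB.c + q₂ * VB.d, ?_⟩
      calc (q₁ * VB.a + q₂ * VB.b) * Grow.1 + (q₁ * VB.c + q₂ * VB.d) * Grow.2
          = q₁ * (Grow.1 * VB.a + Grow.2 * VB.c)
            + q₂ * (Grow.1 * VB.b + Grow.2 * VB.d) := by ring
        _ = Polynomial.C w^2 * (q₁ * K₁ + q₂ * K₂) := by rw [hAa', hAb']; ring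
        _ = Polynomial.C w^3 * h := by rw [hq]; ring
    have he7h : Polynomial.C e^7 * h ∈ 𝔤 := Ideal.mul_mem_right _ _ he7mem
    have key : h = Polynomial.C A7 * (Polynomial.C w^3 * h)
        + Polynomial.C B7 * (Polynomial.C e^7 * h) := by
      linear_combination (-h) * h7C
    rw [key]
    exact 𝔤.add_mem (Ideal.mul_mem_left _ _ hw3) (Ideal.mul_mem_left _ _ he7h)
  have h𝔤le : 𝔤 ≤ I := by
    rw [h𝔤, Ideal.span_le]
    intro x hx
    simp only [Set.mem_insert_iff, Set.mem_singleton_iff] at hx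
    rcases hx with rfl | rfl
    · exact hG1I
    · exact hG2I
  -- the congruences
  have hVCa : VC.a = Polynomial.C e^6 * 1
      + Polynomial.C v^2 * Polynomial.C Gt * X * (Wm.mul (M2.adj UpsL)).a := rfl
  have hVCb : VC.b = Polynomial.C e^6 * 0
      + Polynomial.C v^2 * Polynomial.C Gt * X * (Wm.mul (M2.adj UpsL)).b := rfl
  have hVCc : VC.c = Polynomial.C e^6 * 0
      + Polynomial.C v^2 * Polynomial.C Gt * X * (Wm.mul (M2.adj UpsL)).c := rfl
  have hVCd : VC.d = Polynomial.C e^6 * 1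
      + Polynomial.C v^2 * Polynomial.C Gt * X * (Wm.mul (M2.adj UpsL)).d := rfl
  have hQtil1ex : Qtil.1 = Polynomial.C (f₁.coeff 0) * VC.a
      + Polynomial.C (f₂.coeff 0) * VC.c := rfl
  have hQtil2ex : Qtil.2 = Polynomial.C (f₁.coeff 0) * VC.b
      + Polynomial.C (f₂.coeff 0) * VC.d := rfl
  have hcong1 : Grow.1 - f₁ ∈ 𝔦 := by
    have hv_side : Polynomial.C v^2 * Polynomial.C w^2 * (Grow.1 - f₁) ∈ 𝔦 := by
      have hid : Polynomial.C v^2 * Polynomial.C w^2 * (Grow.1 - f₁)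
          = Polynomial.C v * Polynomial.C w^2 * ε₁
            + Polynomial.C e * K₁ * X * (Polynomial.C e^6 * (Polynomial.C (E4^10) * Dd))
            - Polynomial.C e * K₂ * X * (Polynomial.C e^6 * (Polynomial.C (E4^10) * Dc)) := by
        linear_combination hR3a + hPtil1ex
          + (Polynomial.C v * Polynomial.C w^2) * hK₁def
      rw [hid]
      refine Ideal.sub_mem _ (Ideal.add_mem _ ?_ (hIX _ _ hK₁I)) (hIX _ _ hK₂I)
      exact Ideal.mul_mem_left _ _ hε₁
    have he_side : Polynomial.C e^8 * (Grow.1 - f₁) ∈ 𝔦 := by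
      have hid : Polynomial.C e^8 * (Grow.1 - f₁)
          = Polynomial.C e * Polynomial.C e * X
            * (Polynomial.C (f₁.coeff 0) * (Polynomial.C v^2 * Polynomial.C Gt
                    * (Wm.mul (M2.adj UpsL)).a)
                  + Polynomial.C (f₂.coeff 0) * (Polynomial.C v^2 * Polynomial.C Gt
                    * (Wm.mul (M2.adj UpsL)).c)
                  - Polynomial.C e^6 * h₁) := by
        linear_combination Polynomial.C e^2 * hR2a + Polynomial.C e^2 * hQtil1ex
          + Polynomial.C e^2 * Polynomial.C (f₁.coeff 0) * hVCa
          + Polynomial.C e^2 * Polynomial.C (f₂.coeff 0) * hVCc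
          + (- (Polynomial.C e^8)) * hh₁
      rw [hid]
      exact hIX _ _ hCe
    have key : Grow.1 - f₁ = Polynomial.C A8 * (Polynomial.C v^2 * Polynomial.C w^2
        * (Grow.1 - f₁)) + Polynomial.C B8 * (Polynomial.C e^8 * (Grow.1 - f₁)) := by
      linear_combination (-(Grow.1 - f₁)) * h8C
    rw [key]
    exact 𝔦.add_mem (Ideal.mul_mem_left _ _ hv_side) (Ideal.mul_mem_left _ _ he_side)
  have hcong2 : Grow.2 - f₂ ∈ 𝔦 := by
    have hv_side : Polynomial.C v^2 * Polynomial.C w^2 * (Grow.2 - f₂) ∈ 𝔦 := by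
      have hid : Polynomial.C v^2 * Polynomial.C w^2 * (Grow.2 - f₂)
          = Polynomial.C v * Polynomial.C w^2 * ε₂
            + Polynomial.C e * K₂ * X * (Polynomial.C e^6 * (Polynomial.C (E4^10) * Da))
            - Polynomial.C e * K₁ * X * (Polynomial.C e^6 * (Polynomial.C (E4^10) * Db)) := by
        linear_combination hR3b + hPtil2ex
          + (Polynomial.C v * Polynomial.C w^2) * hK₂def
      rw [hid]
      refine Ideal.sub_mem _ (Ideal.add_mem _ ?_ (hIX _ _ hK₂I)) (hIX _ _ hK₁I)
      exact Ideal.mul_mem_left _ _ hε₂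
    have he_side : Polynomial.C e^8 * (Grow.2 - f₂) ∈ 𝔦 := by
      have hid : Polynomial.C e^8 * (Grow.2 - f₂)
          = Polynomial.C e * Polynomial.C e * X
            * (Polynomial.C (f₁.coeff 0) * (Polynomial.C v^2 * Polynomial.C Gt
                    * (Wm.mul (M2.adj UpsL)).b)
                  + Polynomial.C (f₂.coeff 0) * (Polynomial.C v^2 * Polynomial.C Gt
                    * (Wm.mul (M2.adj UpsL)).d)
                  - Polynomial.C e^6 * h₂) := by
        linear_combination Polynomial.C e^2 * hR2b + Polynomial.C e^2 * hQtil2ex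
          + Polynomial.C e^2 * Polynomial.C (f₁.coeff 0) * hVCb
          + Polynomial.C e^2 * Polynomial.C (f₂.coeff 0) * hVCd
          + (- (Polynomial.C e^8)) * hh₂
      rw [hid]
      exact hIX _ _ hCe
    have key : Grow.2 - f₂ = Polynomial.C A8 * (Polynomial.C v^2 * Polynomial.C w^2
        * (Grow.2 - f₂)) + Polynomial.C B8 * (Polynomial.C e^8 * (Grow.2 - f₂)) := by
      linear_combination (-(Grow.2 - f₂)) * h8C
    rw [key]
    exact 𝔦.add_mem (Ideal.mul_mem_left _ _ hv_side) (Ideal.mul_mem_left _ _ he_side)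
  exact ⟨Grow.1, Grow.2, le_antisymm hIle h𝔤le, hcong1, hcong2⟩

end Core

set_option maxHeartbeats 1600000 in
/-- Let `A` be a Noetherian domain, `I ⊆ A[T]` with `I = (f₁, f₂) + I²T` and
`J = I ∩ A`.  If `I_{1+J} = (g₁, g₂)` with `g_i − f_i ∈ (I²T)_{1+J}`, then `I = (F₁, F₂)` with
`F_i − f_i ∈ I²T`. -/
theorem statement15 {A : Type} [CommRing A] [IsDomain A] [IsNoetherianRing A]
    (I : Ideal (Polynomial A))
    (f₁ f₂ : Polynomial A) (hf₁ : f₁ ∈ I) (hf₂ : f₂ ∈ I)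
    (hgen : I = Ideal.span {f₁, f₂} ⊔ I ^ 2 * Ideal.span {(X : Polynomial A)})
    (J : Ideal A) (hJ : J = I.comap (Polynomial.C : A →+* Polynomial A))
    (g₁ g₂ : Polynomial (Localization (oneAdd J)))
    (hloc : I.map (Polynomial.mapRingHom (algebraMap A (Localization (oneAdd J)))) =
      Ideal.span {g₁, g₂})
    (hg₁ : g₁ - f₁.map (algebraMap A (Localization (oneAdd J))) ∈
      (I ^ 2 * Ideal.span {(X : Polynomial A)}).map
        (Polynomial.mapRingHom (algebraMap A (Localization (oneAdd J)))))
    (hg₂ : g₂ - f₂.map (algebraMap A (Localization (oneAdd J))) ∈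
      (I ^ 2 * Ideal.span {(X : Polynomial A)}).map
        (Polynomial.mapRingHom (algebraMap A (Localization (oneAdd J))))) :
    ∃ F₁ F₂ : Polynomial A, I = Ideal.span {F₁, F₂} ∧
      F₁ - f₁ ∈ I ^ 2 * Ideal.span {(X : Polynomial A)} ∧
      F₂ - f₂ ∈ I ^ 2 * Ideal.span {(X : Polynomial A)} := by
  classical
  by_cases hIT : I = ⊤
  · -- the trivial case `I = ⊤`
    subst hIT
    have h1 : (1 : Polynomial A) ∈ Ideal.span {f₁, f₂}
        ⊔ (⊤ : Ideal (Polynomial A)) ^ 2 * Ideal.span {(X : Polynomial A)} := by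
      rw [← hgen]; exact Submodule.mem_top
    obtain ⟨y, hy, d, hd, hyd⟩ := Submodule.mem_sup.mp h1
    obtain ⟨a, b, hab⟩ := Ideal.mem_span_pair.mp hy
    have htopX : (⊤ : Ideal (Polynomial A)) ^ 2 * Ideal.span {(X : Polynomial A)}
        = Ideal.span {(X : Polynomial A)} := by
      rw [Ideal.top_pow, Ideal.top_mul]
    have hd0 : d.coeff 0 = 0 := by
      rw [htopX, Ideal.mem_span_singleton] at hd
      exact X_dvd_iff.mp hd
    have hone : a.coeff 0 * f₁.coeff 0 + b.coeff 0 * f₂.coeff 0 = 1 := by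
      have h := congrArg (fun q : Polynomial A => q.coeff 0) hyd
      simp only [coeff_add, coeff_one] at h
      rw [← hab] at h
      simp only [coeff_add, mul_coeff_zero, hd0] at h
      simpa using h
    refine ⟨Polynomial.C (f₁.coeff 0), Polynomial.C (f₂.coeff 0), ?_, ?_, ?_⟩
    · symm
      rw [Ideal.eq_top_iff_one]
      refine Ideal.mem_span_pair.mpr ⟨Polynomial.C (a.coeff 0), Polynomial.C (b.coeff 0), ?_⟩
      have h := congrArg (Polynomial.C (R := A)) hone
      simpa [map_add, map_mul] using h
    · rw [htopX, Ideal.mem_span_singleton]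
      exact X_dvd_iff.mpr (by simp [coeff_C])
    · rw [htopX, Ideal.mem_span_singleton]
      exact X_dvd_iff.mpr (by simp [coeff_C])
  · -- the main case
    set Loc := Localization (oneAdd J) with hLoc
    set Ψ := Polynomial.mapRingHom (algebraMap A Loc) with hΨ
    have hmon0 : ∀ x ∈ oneAdd J, x ≠ 0 := by
      rintro x ⟨j, hjJ, rfl⟩ hx0
      have hj : j = -1 := by linear_combination hx0
      have hCj : Polynomial.C j ∈ I := by
        rw [hJ] at hjJ; exact hjJ
      rw [hj] at hCj
      have hu : IsUnit (Polynomial.C (-1 : A)) :=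
        IsUnit.map (Polynomial.C : A →+* Polynomial A) isUnit_one.neg
      exact hIT (I.eq_top_of_isUnit_mem hCj hu)
    have hle : oneAdd J ≤ nonZeroDivisors A :=
      fun x hx => mem_nonZeroDivisors_of_ne_zero (hmon0 x hx)
    have hinjA : Function.Injective (algebraMap A Loc) := IsLocalization.injective _ hle
    have hinj : Function.Injective Ψ := by
      intro p q hpq
      exact Polynomial.map_injective _ hinjA (by simpa [hΨ] using hpq)
    -- clear denominators in the congruence data
    obtain ⟨t₁, δ₁, hδ₁, ht₁⟩ := clear_mem_map J _ _ hg₁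
    obtain ⟨t₂, δ₂, hδ₂, ht₂⟩ := clear_mem_map J _ _ hg₂
    -- a finite generating set for I
    obtain ⟨S, hS⟩ := IsNoetherian.noetherian I
    -- denominators for the generators
    have hstep : ∀ h ∈ S, ∃ u : oneAdd J, ∃ r₁ r₂ : Polynomial A,
        Polynomial.C (algebraMap A Loc u) * Ψ h
          = (r₁.map (algebraMap A Loc)) * g₁ + (r₂.map (algebraMap A Loc)) * g₂ := by
      intro h hh
      have hhI : h ∈ I := by
        rw [← hS]; exact Ideal.subset_span hh
      have hmem : Ψ h ∈ Ideal.span {g₁, g₂} := by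
        rw [← hloc]; exact Ideal.mem_map_of_mem _ hhI
      obtain ⟨q₁, q₂, hq⟩ := Ideal.mem_span_pair.mp hmem
      obtain ⟨m₁, r₁, hr₁⟩ := clear_poly J q₁
      obtain ⟨m₂, r₂, hr₂⟩ := clear_poly J q₂
      refine ⟨m₁ * m₂, Polynomial.C (m₂ : A) * r₁, Polynomial.C (m₁ : A) * r₂, ?_⟩
      rw [Polynomial.map_mul, Polynomial.map_mul, Polynomial.map_C, Polynomial.map_C,
        ← hr₁, ← hr₂, ← hq]
      simp only [Submonoid.coe_mul, map_mul]
      ring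
    choose uu rr₁ rr₂ hclear using hstep
    set U : oneAdd J := ∏ x ∈ S.attach, uu x.1 x.2 with hU
    set vM : oneAdd J := t₁ * t₂ with hvM
    set v : A := (vM : A) with hv
    set w : A := ((U * vM : oneAdd J) : A) with hw
    set ε₁ : Polynomial A := Polynomial.C (t₂ : A) * δ₁ with hε₁def
    set ε₂ : Polynomial A := Polynomial.C (t₁ : A) * δ₂ with hε₂def
    have hε₁ : ε₁ ∈ I ^ 2 * Ideal.span {(X : Polynomial A)} := Ideal.mul_mem_left _ _ hδ₁
    have hε₂ : ε₂ ∈ I ^ 2 * Ideal.span {(X : Polynomial A)} := Ideal.mul_mem_left _ _ hδ₂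
    set K₁ : Polynomial A := Polynomial.C v * f₁ + ε₁ with hK₁def
    set K₂ : Polynomial A := Polynomial.C v * f₂ + ε₂ with hK₂def
    -- v clears g₁ g₂
    have hKg₁ : Polynomial.C (algebraMap A Loc v) * g₁ = K₁.map (algebraMap A Loc) := by
      have h1 : Polynomial.C (algebraMap A Loc t₁) * g₁
          = (Polynomial.C (t₁ : A) * f₁ + δ₁).map (algebraMap A Loc) := by
        rw [Polynomial.map_add, Polynomial.map_mul, Polynomial.map_C, ← ht₁]
        ring
      calc Polynomial.C (algebraMap A Loc v) * g₁
          = Polynomial.C (algebraMap A Loc t₂)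
            * (Polynomial.C (algebraMap A Loc t₁) * g₁) := by
            rw [hv, hvM]
            simp only [Submonoid.coe_mul, map_mul]
            ring
        _ = K₁.map (algebraMap A Loc) := by
            rw [h1, hK₁def, hε₁def]
            simp only [Polynomial.map_add, Polynomial.map_mul, Polynomial.map_C, hv, hvM,
              Submonoid.coe_mul, map_mul]
            ring
    have hKg₂ : Polynomial.C (algebraMap A Loc v) * g₂ = K₂.map (algebraMap A Loc) := by
      have h1 : Polynomial.C (algebraMap A Loc t₂) * g₂
          = (Polynomial.C (t₂ : A) * f₂ + δ₂).map (algebraMap A Loc) := by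
        rw [Polynomial.map_add, Polynomial.map_mul, Polynomial.map_C, ← ht₂]
        ring
      calc Polynomial.C (algebraMap A Loc v) * g₂
          = Polynomial.C (algebraMap A Loc t₁)
            * (Polynomial.C (algebraMap A Loc t₂) * g₂) := by
            rw [hv, hvM]
            simp only [Submonoid.coe_mul, map_mul]
            ring
        _ = K₂.map (algebraMap A Loc) := by
            rw [h1, hK₂def, hε₂def]
            simp only [Polynomial.map_add, Polynomial.map_mul, Polynomial.map_C, hv, hvM,
              Submonoid.coe_mul, map_mul]
            ring
    -- all of I is cleared by w
    have hKall : ∀ h ∈ I, Polynomial.C w * h ∈ Ideal.span {K₁, K₂} := by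
      have hgens : ∀ h ∈ S, Polynomial.C w * h ∈ Ideal.span {K₁, K₂} := by
        intro h hh
        have hc := hclear h hh
        have h2 : Ψ (Polynomial.C ((uu h hh : A) * v) * h)
            = Ψ (rr₁ h hh * K₁ + rr₂ h hh * K₂) := by
          show (Polynomial.C ((uu h hh : A) * v) * h).map (algebraMap A Loc)
            = (rr₁ h hh * K₁ + rr₂ h hh * K₂).map (algebraMap A Loc)
          rw [Polynomial.map_mul, Polynomial.map_C, Polynomial.map_add,
            Polynomial.map_mul, Polynomial.map_mul]
          have hΨh : h.map (algebraMap A Loc) = Ψ h := rfl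
          calc Polynomial.C ((algebraMap A Loc) ((uu h hh : A) * v))
                * h.map (algebraMap A Loc)
              = Polynomial.C ((algebraMap A Loc) v)
                * (Polynomial.C ((algebraMap A Loc) (uu h hh : A)) * Ψ h) := by
                rw [hΨh, map_mul, map_mul]; ring
            _ = Polynomial.C ((algebraMap A Loc) v)
                * ((rr₁ h hh).map (algebraMap A Loc) * g₁
                  + (rr₂ h hh).map (algebraMap A Loc) * g₂) := by rw [hc]
            _ = (rr₁ h hh).map (algebraMap A Loc)
                  * (Polynomial.C ((algebraMap A Loc) v) * g₁)
                + (rr₂ h hh).map (algebraMap A Loc)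
                  * (Polynomial.C ((algebraMap A Loc) v) * g₂) := by ring
            _ = _ := by rw [hKg₁, hKg₂]
        have h4 : Polynomial.C ((uu h hh : A) * v) * h
            = rr₁ h hh * K₁ + rr₂ h hh * K₂ := hinj h2
        have hUcoe : (U : A)
            = (uu h hh : A) * ∏ x ∈ S.attach.erase ⟨h, hh⟩, (uu x.1 x.2 : A) := by
          rw [hU]
          push_cast
          exact (Finset.mul_prod_erase S.attach _ (Finset.mem_attach S ⟨h, hh⟩)).symm
        have hwA : w = (∏ x ∈ S.attach.erase ⟨h, hh⟩, (uu x.1 x.2 : A))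
            * ((uu h hh : A) * v) := by
          rw [hw]
          push_cast
          rw [hUcoe, hv]
          ring
        have h5 : Polynomial.C w * h
            = Polynomial.C (∏ x ∈ S.attach.erase ⟨h, hh⟩, (uu x.1 x.2 : A))
              * (Polynomial.C ((uu h hh : A) * v) * h) := by
          rw [hwA, map_mul]; ring
        rw [h5, h4]
        exact Ideal.mul_mem_left _ _ (Ideal.mem_span_pair.mpr ⟨_, _, rfl⟩)
      intro h hh
      have hcolon : I ≤ (Ideal.span {K₁, K₂}).colon (Ideal.span {Polynomial.C w}) := by
        rw [← hS, Submodule.span_le]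
        intro x hx
        rw [SetLike.mem_coe, Ideal.mem_colon_span_singleton, mul_comm]
        exact hgens x hx
      have hx := hcolon hh
      rw [Ideal.mem_colon_span_singleton, mul_comm] at hx
      exact hx
    -- the element e
    have hvmem : v ∈ oneAdd J := vM.2
    have hwmem : w ∈ oneAdd J := (U * vM).2
    obtain ⟨e, heJ, hev⟩ : ∃ j ∈ J, v * w = 1 + j := by
      obtain ⟨j, hj, heq⟩ := (vM * (U * vM)).2
      refine ⟨j, hj, ?_⟩
      rw [hv, hw, ← Submonoid.coe_mul]
      exact heq
    have hCe : Polynomial.C e ∈ I := by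
      rw [hJ] at heJ; exact heJ
    by_cases he0 : e = 0
    · -- v * w = 1 : no localization was needed
      have hvw1 : Polynomial.C v * Polynomial.C w = (1 : Polynomial A) := by
        rw [← map_mul, hev, he0]; simp
      have hF₁ : f₁ + Polynomial.C w * ε₁ = Polynomial.C w * K₁ := by
        linear_combination (- (Polynomial.C w)) * hK₁def + (- f₁) * hvw1
      have hF₂ : f₂ + Polynomial.C w * ε₂ = Polynomial.C w * K₂ := by
        linear_combination (- (Polynomial.C w)) * hK₂def + (- f₂) * hvw1
      refine ⟨f₁ + Polynomial.C w * ε₁, f₂ + Polynomial.C w * ε₂, ?_, ?_, ?_⟩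
      · apply le_antisymm
        · intro h hh
          obtain ⟨q₁, q₂, hq⟩ := Ideal.mem_span_pair.mp (hKall h hh)
          refine Ideal.mem_span_pair.mpr
            ⟨Polynomial.C v ^ 2 * q₁, Polynomial.C v ^ 2 * q₂, ?_⟩
          have hgoal : Polynomial.C v ^ 2 * q₁ * (Polynomial.C w * K₁)
              + Polynomial.C v ^ 2 * q₂ * (Polynomial.C w * K₂) = h := by
            linear_combination (Polynomial.C v ^ 2 * Polynomial.C w) * hq
              + (h * (Polynomial.C v * Polynomial.C w + 1)) * hvw1
          rw [← hF₁, ← hF₂] at hgoal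
          exact hgoal
        · rw [Ideal.span_le]
          intro x hx
          simp only [Set.mem_insert_iff, Set.mem_singleton_iff] at hx
          rcases hx with rfl | rfl
          · exact I.add_mem hf₁ (Ideal.mul_mem_left _ _ (le_trans
              Ideal.mul_le_left (Ideal.pow_le_self two_ne_zero) hε₁))
          · exact I.add_mem hf₂ (Ideal.mul_mem_left _ _ (le_trans
              Ideal.mul_le_left (Ideal.pow_le_self two_ne_zero) hε₂))
      · simpa using Ideal.mul_mem_left _ (Polynomial.C w) hε₁
      · simpa using Ideal.mul_mem_left _ (Polynomial.C w) hε₂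
    · -- the main construction
      have hv0 : v ≠ 0 := hmon0 v hvmem
      have hw0 : w ≠ 0 := hmon0 w hwmem
      have hCeI : Polynomial.C e ∈ Ideal.span {f₁, f₂}
          ⊔ I ^ 2 * Ideal.span {(X : Polynomial A)} := by
        rw [← hgen]; exact hCe
      obtain ⟨y, hy, d, hd, hyd⟩ := Submodule.mem_sup.mp hCeI
      obtain ⟨a, b, hab⟩ := Ideal.mem_span_pair.mp hy
      have hd0 : d.coeff 0 = 0 := by
        have hdX : d ∈ Ideal.span {(X : Polynomial A)} := Ideal.mul_le_right hd
        rw [Ideal.mem_span_singleton] at hdX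
        exact X_dvd_iff.mp hdX
      have hcf : a.coeff 0 * f₁.coeff 0 + b.coeff 0 * f₂.coeff 0 = e := by
        have h := congrArg (fun q : Polynomial A => q.coeff 0) hyd
        simp only [coeff_add, coeff_C_zero, hd0] at h
        rw [← hab] at h
        simp only [coeff_add, mul_coeff_zero, hd0] at h
        simpa using h
      exact core I f₁ f₂ hf₁ hf₂ v w e hev hCe he0 hv0 hw0 _ _ hcf ε₁ ε₂ hε₁ hε₂ hKall
end
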